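/- arXiv:1911.10646 — 4 statements merged into one kernel-verified Lean document; each statement's English description precedes it below -/
import Mathlib

section
/- Let $V$ be a vector space over a field $K$ and let $v_1, \dots, v_u \in V$ with $u \geq 2$. Fix $j$ with $2 \leq j \leq u$. Then there is at most one scalar $\lambda \in K$ such that $\dim \operatorname{span}\{v_2, \dots, v_{j-1}, v_j + \lambda v_1, v_{j+1}, \dots, v_u\} < \dim \operatorname{span}\{v_2, \dots, v_u\}$. -/
open Submodule Module

lemma key_aux {K V : Type*} [Field K] [AddCommGroup V] [Module K V]
    (s : Set V) (hs : s.Finite) (a b : V)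
    (h : finrank K ↥(span K (insert a s)) < finrank K ↥(span K (insert b s))) :
    a ∈ span K s ∧ b ∉ span K s := by
  haveI : FiniteDimensional K (span K s) := FiniteDimensional.span_of_finite K hs
  haveI : FiniteDimensional K (span K (insert a s)) :=
    FiniteDimensional.span_of_finite K (hs.insert a)
  haveI : FiniteDimensional K (span K (insert b s)) :=
    FiniteDimensional.span_of_finite K (hs.insert b)
  have hTle : span K s ≤ span K (insert a s) := span_mono (Set.subset_insert _ _)
  have hT : finrank K ↥(span K s) ≤ finrank K ↥(span K (insert a s)) :=
    Submodule.finrank_mono hTle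
  have hWb : finrank K ↥(span K (insert b s)) ≤ finrank K ↥(span K s) + 1 := by
    rw [span_insert]
    calc finrank K ↥((K ∙ b) ⊔ span K s)
        ≤ finrank K ↥(K ∙ b) + finrank K ↥(span K s) :=
          Submodule.finrank_add_le_finrank_add_finrank _ _
      _ ≤ finrank K ↥(span K s) + 1 := by
          have hb1 : finrank K ↥(span K ({b} : Set V)) ≤ 1 := by
            simpa using finrank_span_le_card (R := K) ({b} : Set V)
          omega
  have heq : span K s = span K (insert a s) :=
    Submodule.eq_of_le_of_finrank_le hTle (by omega)
  constructor
  · rw [heq]; exact subset_span (Set.mem_insert a s)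
  · intro hb
    have : span K (insert b s) ≤ span K s := by
      rw [span_le]; intro x hx
      rcases hx with rfl | hx
      · exact hb
      · exact subset_span hx
    have := Submodule.finrank_mono this
    omega

/-- At most one scalar `λ` makes the dimension of the span drop when
`v j` is replaced by `v j + λ • v 1`. -/
theorem span_dim_drop_unique {K V : Type*} [Field K] [AddCommGroup V] [Module K V]
    (u : ℕ) (hu : 2 ≤ u) (v : ℕ → V) (j : ℕ) (hj1 : 2 ≤ j) (hj2 : j ≤ u)
    (lam₁ lam₂ : K)
    (h1 : Module.finrank K ↥(Submodule.span K
        ((fun i => if i = j then v j + lam₁ • v 1 else v i) '' Set.Icc 2 u)) <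
      Module.finrank K ↥(Submodule.span K (v '' Set.Icc 2 u)))
    (h2 : Module.finrank K ↥(Submodule.span K
        ((fun i => if i = j then v j + lam₂ • v 1 else v i) '' Set.Icc 2 u)) <
      Module.finrank K ↥(Submodule.span K (v '' Set.Icc 2 u))) :
    lam₁ = lam₂ := by
  have hjmem : j ∈ Set.Icc 2 u := Set.mem_Icc.mpr ⟨hj1, hj2⟩
  set s : Set V := v '' (Set.Icc 2 u \ {j}) with hs_def
  have hsfin : s.Finite := ((Set.finite_Icc 2 u).diff : (Set.Icc 2 u \ {j}).Finite).image v
  have hIcc : Set.Icc 2 u = insert j (Set.Icc 2 u \ {j}) := by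
    rw [Set.insert_diff_singleton, Set.insert_eq_self.mpr hjmem]
  have himg : ∀ lam : K,
      ((fun i => if i = j then v j + lam • v 1 else v i) '' Set.Icc 2 u)
        = insert (v j + lam • v 1) s := by
    intro lam
    rw [hIcc, Set.image_insert_eq]
    congr 1
    · simp
    · apply Set.image_congr
      intro i hi
      simp only [Set.mem_diff, Set.mem_singleton_iff] at hi
      simp [hi.2]
  have hvimg : v '' Set.Icc 2 u = insert (v j) s := by
    rw [hIcc, Set.image_insert_eq]
  rw [himg lam₁, hvimg] at h1
  rw [himg lam₂, hvimg] at h2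
  obtain ⟨ha1, hb⟩ := key_aux s hsfin _ _ h1
  obtain ⟨ha2, -⟩ := key_aux s hsfin _ _ h2
  by_contra hne
  have hdiff : (lam₁ - lam₂) • v 1 ∈ span K s := by
    have := Submodule.sub_mem _ ha1 ha2
    simpa [sub_smul] using this
  have hv1 : v 1 ∈ span K s := by
    have := Submodule.smul_mem _ (lam₁ - lam₂)⁻¹ hdiff
    rwa [smul_smul, inv_mul_cancel₀ (sub_ne_zero.mpr hne), one_smul] at this
  have : v j ∈ span K s := by
    have := Submodule.sub_mem _ ha1 (Submodule.smul_mem _ lam₁ hv1)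
    simpa using this
  exact hb this
end

section
/- Let $R$ be a Noetherian ring and $I \subsetneq R$ an ideal with $\operatorname{grade}(I) = d$. Then there are only finitely many prime ideals $P \supseteq I$ with $\operatorname{depth} R_P = d$. -/
open CategoryTheory

universe u

/-- The depth of a module over a local ring: the supremum of lengths of
regular sequences on `M` contained in the maximal ideal. -/
noncomputable def moduleDepth (R M : Type*) [CommRing R] [IsLocalRing R]
    [AddCommGroup M] [Module R M] : ℕ∞ :=
  sSup {n : ℕ∞ | ∃ rs : List R, (rs.length : ℕ∞) = n ∧
    (∀ r ∈ rs, r ∈ IsLocalRing.maximalIdeal R) ∧ RingTheory.Sequence.IsRegular M rs}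

/-- The depth of the localization of `R` at a prime `P`. -/
noncomputable def primeDepth (R : Type*) [CommRing R] (P : Ideal R) (hP : P.IsPrime) :
    ℕ∞ :=
  letI := hP
  moduleDepth (Localization.AtPrime P) (Localization.AtPrime P)

/-- The grade of an ideal `I`: the infimum of the `i` such that `Ext^i(R/I, R) ≠ 0`. -/
noncomputable def idealGrade (R : Type u) [CommRing R] (I : Ideal R) : ℕ∞ :=
  sInf {n : ℕ∞ | ∃ i : ℕ, (i : ℕ∞) = n ∧
    ¬ Subsingleton (((Ext R (ModuleCat.{u} R) i).obj
      (Opposite.op (ModuleCat.of R (R ⧸ I)))).obj (ModuleCat.of R R))}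

/-! ## Auxiliary material -/

section AssFinite

open Submodule

variable {R : Type*} [CommRing R] {M : Type*} [AddCommGroup M] [Module R M]

lemma aux_isAssociatedPrime_submodule_or_quot [IsNoetherianRing R] {p : Ideal R} (N : Submodule R M)
    (hp : IsAssociatedPrime p M) :
    IsAssociatedPrime p N ∨ IsAssociatedPrime p (M ⧸ N) := by
  obtain ⟨hprime, x, hx⟩ := isAssociatedPrime_iff.mp hp
  have hxann : ∀ r : R, r ∈ p ↔ r • x = 0 := fun r => by
    rw [hx, Submodule.mem_colon_singleton, Submodule.mem_bot]
  by_cases h : ∃ a : R, a • x ∈ N ∧ a • x ≠ 0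
  · obtain ⟨a, haN, ha0⟩ := h
    left
    refine isAssociatedPrime_iff.mpr ⟨hprime, ⟨a • x, haN⟩, ?_⟩
    ext r
    rw [Submodule.mem_colon_singleton, Submodule.mem_bot]
    constructor
    · intro hr
      apply Subtype.ext
      show r • (a • x) = (0 : M)
      rw [smul_comm, (hxann r).mp hr, smul_zero]
    · intro hr
      have h1 : (r * a) • x = 0 := by
        have := congrArg Subtype.val hr
        rw [mul_smul]
        simpa using this
      rcases hprime.mem_or_mem ((hxann _).mpr h1) with h' | h'
      · exact h'
      · exact absurd ((hxann a).mp h') ha0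
  · right
    push_neg at h
    refine isAssociatedPrime_iff.mpr ⟨hprime, N.mkQ x, ?_⟩
    ext r
    rw [Submodule.mem_colon_singleton, Submodule.mem_bot, ← map_smul, Submodule.mkQ_apply,
      Submodule.Quotient.mk_eq_zero]
    constructor
    · intro hr
      rw [(hxann r).mp hr]; exact N.zero_mem
    · intro hr
      by_contra hrp
      exact ((hxann r).not.mp hrp) (h r hr)

theorem aux_associatedPrimes_finite (R M : Type*) [CommRing R] [IsNoetherianRing R]
    [AddCommGroup M] [Module R M] [Module.Finite R M] :
    (associatedPrimes R M).Finite := by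
  have key : ∀ N : Submodule R M, (associatedPrimes R (M ⧸ N)).Finite := by
    intro N
    induction N using IsNoetherian.induction with
    | _ N IH =>
      by_cases htriv : Subsingleton (M ⧸ N)
      · rw [associatedPrimes.eq_empty_of_subsingleton]; exact Set.finite_empty
      · have : Nontrivial (M ⧸ N) := not_subsingleton_iff_nontrivial.mp htriv
        obtain ⟨p, hp⟩ := associatedPrimes.nonempty R (M ⧸ N)
        obtain ⟨hprime, m, hm⟩ := isAssociatedPrime_iff.mp hp
        have hm0 : m ≠ 0 := by
          rintro rfl
          apply hprime.ne_top
          rw [hm, Ideal.eq_top_iff_one, Submodule.mem_colon_singleton, smul_zero]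
          exact Submodule.zero_mem _
        set K : Submodule R (M ⧸ N) := R ∙ m with hK
        set N' : Submodule R M := K.comap N.mkQ with hN'
        have hNN' : N < N' := by
          rw [lt_iff_le_and_ne]
          constructor
          · intro y hy
            simp only [hN', Submodule.mem_comap, Submodule.mkQ_apply,
              (Submodule.Quotient.mk_eq_zero N).mpr hy]
            exact K.zero_mem
          · intro hEq
            obtain ⟨y, hy⟩ := Submodule.mkQ_surjective N m
            have : y ∈ N' := by
              simp [hN', Submodule.mem_comap, hy, hK, Submodule.mem_span_singleton]
            rw [← hEq] at this
            exact hm0 (hy ▸ (Submodule.Quotient.mk_eq_zero N).mpr this)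
        have hKmap : N'.map N.mkQ = K :=
          Submodule.map_comap_eq_of_surjective (Submodule.mkQ_surjective N) K
        have hsub : associatedPrimes R (M ⧸ N) ⊆
            associatedPrimes R K ∪ associatedPrimes R ((M ⧸ N) ⧸ K) := by
          intro q hq
          rcases aux_isAssociatedPrime_submodule_or_quot K hq with h | h
          · exact Or.inl h
          · exact Or.inr h
        refine Set.Finite.subset (Set.Finite.union ?_ ?_) hsub
        · have e : (R ⧸ p) ≃ₗ[R] K := by
            refine (Submodule.quotEquivOfEq _ _ ?_).symm.trans
              ((LinearMap.toSpanSingleton R (M ⧸ N) m).quotKerEquivRange.trans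
                (LinearEquiv.ofEq _ _ (LinearMap.span_singleton_eq_range R (M ⧸ N) m).symm))
            ext r
            rw [LinearMap.mem_ker, LinearMap.toSpanSingleton_apply, hm,
              Submodule.mem_colon_singleton, Submodule.mem_bot]
          rw [← LinearEquiv.AssociatedPrimes.eq e,
            associatedPrimes.eq_singleton_of_isPrimary hprime.isPrimary]
          exact Set.finite_singleton p.radical
        · have e : ((M ⧸ N) ⧸ K) ≃ₗ[R] (M ⧸ N') := by
            rw [← hKmap]
            exact Submodule.quotientQuotientEquivQuotient N N' hNN'.le
          rw [LinearEquiv.AssociatedPrimes.eq e]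
          exact IH N' hNN'
  have := key ⊥
  rwa [LinearEquiv.AssociatedPrimes.eq (Submodule.quotEquivOfEqBot ⊥ rfl)] at this

end AssFinite

section ExtMachinery

open CategoryTheory.Limits Opposite

variable {R : Type u} [CommRing R]

/-- Functoriality of the complex `Hom(P_•, Y)` in `Y`. -/
noncomputable def extComplexMap (X : ModuleCat.{u} R) (P : ProjectiveResolution X)
    {A B : ModuleCat.{u} R} (f : A ⟶ B) :
    P.complex.linearYonedaObj R A ⟶ P.complex.linearYonedaObj R B where
  f i := ((linearYoneda R (ModuleCat.{u} R)).map f).app (op (P.complex.X i))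
  comm' i j _ := by
    ext (g : P.complex.X i ⟶ A)
    exact (Category.assoc (P.complex.d j i) g f).symm

lemma extComplexMap_comp_w (X : ModuleCat.{u} R) (P : ProjectiveResolution X)
    {S : ShortComplex (ModuleCat.{u} R)} :
    extComplexMap X P S.f ≫ extComplexMap X P S.g = 0 := by
  ext i (g : P.complex.X i ⟶ S.X₁)
  show (g ≫ S.f) ≫ S.g = 0
  rw [Category.assoc, S.zero, Limits.comp_zero]

/-- The short complex of cochain complexes `Hom(P,A) → Hom(P,B) → Hom(P,C)`. -/
noncomputable def extComplexSC (X : ModuleCat.{u} R) (P : ProjectiveResolution X)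
    (S : ShortComplex (ModuleCat.{u} R)) :
    ShortComplex (CochainComplex (ModuleCat.{u} R) ℕ) :=
  ShortComplex.mk (extComplexMap X P S.f) (extComplexMap X P S.g) (extComplexMap_comp_w X P)

lemma extComplexSC_shortExact (X : ModuleCat.{u} R) (P : ProjectiveResolution X)
    {S : ShortComplex (ModuleCat.{u} R)} (hS : S.ShortExact) :
    (extComplexSC X P S).ShortExact := by
  rw [HomologicalComplex.shortExact_iff_degreewise_shortExact]
  intro i
  have hmono : Mono S.f := hS.mono_f
  have hepi : Epi S.g := hS.epi_g
  haveI mono_f : Mono ((extComplexSC X P S).map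
      (HomologicalComplex.eval (ModuleCat.{u} R) (ComplexShape.up ℕ) i)).f := by
    rw [ModuleCat.mono_iff_injective]
    intro (g₁ : P.complex.X i ⟶ S.X₁) (g₂ : P.complex.X i ⟶ S.X₁) h
    have h' : g₁ ≫ S.f = g₂ ≫ S.f := h
    exact (cancel_mono S.f).mp h'
  haveI epi_g : Epi ((extComplexSC X P S).map
      (HomologicalComplex.eval (ModuleCat.{u} R) (ComplexShape.up ℕ) i)).g := by
    rw [ModuleCat.epi_iff_surjective]
    intro (h : P.complex.X i ⟶ S.X₃)
    exact ⟨Projective.factorThru h S.g, Projective.factorThru_comp h S.g⟩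
  refine ⟨?_⟩
  rw [ShortComplex.moduleCat_exact_iff]
  intro (h : P.complex.X i ⟶ S.X₂) hh
  have hh' : h ≫ S.g = 0 := hh
  let k : P.complex.X i ⟶ S.X₁ := hS.fIsKernel.lift (KernelFork.ofι h hh')
  refine ⟨k, ?_⟩
  show k ≫ S.f = h
  exact hS.fIsKernel.fac (KernelFork.ofι h hh') WalkingParallelPair.zero

/-- Abbreviation for the Ext group as in the problem statement. -/
noncomputable abbrev extGrp (X Y : ModuleCat.{u} R) (n : ℕ) : ModuleCat.{u} R :=
  ((Ext R (ModuleCat.{u} R) n).obj (op X)).obj Y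

lemma isZero_of_subsingleton_ext {X Y : ModuleCat.{u} R} {n : ℕ}
    (P : ProjectiveResolution X) (h : Subsingleton (extGrp X Y n)) :
    IsZero ((P.complex.linearYonedaObj R Y).homology n) :=
  (IsZero.of_iso (ModuleCat.isZero_of_subsingleton _) (P.isoExt n Y).symm)

lemma subsingleton_ext_of_isZero {X Y : ModuleCat.{u} R} {n : ℕ}
    (P : ProjectiveResolution X) (h : IsZero ((P.complex.linearYonedaObj R Y).homology n)) :
    Subsingleton (extGrp X Y n) := by
  have hz : IsZero (extGrp X Y n) := IsZero.of_iso h (P.isoExt n Y)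
  have h0 : ∀ a : extGrp X Y n, a = 0 := by
    intro a
    have h1 : 𝟙 (extGrp X Y n) = 0 := hz.eq_of_src _ _
    calc a = (𝟙 (extGrp X Y n) : extGrp X Y n ⟶ _) a := rfl
      _ = (0 : extGrp X Y n ⟶ extGrp X Y n) a := by rw [h1]
      _ = 0 := rfl
  exact ⟨fun a b => (h0 a).trans (h0 b).symm⟩

/-- Dimension shift / vanishing transfer along a SES. -/
lemma subsingleton_ext_of_ses {S : ShortComplex (ModuleCat.{u} R)} (hS : S.ShortExact)
    (X : ModuleCat.{u} R) (n : ℕ)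
    (h2 : Subsingleton (extGrp X S.X₂ n)) (h1 : Subsingleton (extGrp X S.X₁ (n + 1))) :
    Subsingleton (extGrp X S.X₃ n) := by
  let P : ProjectiveResolution X := ProjectiveResolution.of X
  have hses := extComplexSC_shortExact X P hS
  have hrel : (ComplexShape.up ℕ).Rel n (n + 1) := rfl
  have hex := hses.homology_exact₃ n (n + 1) hrel
  have hz2 : IsZero (((extComplexSC X P S).X₂).homology n) :=
    isZero_of_subsingleton_ext P h2
  have hz1 : IsZero (((extComplexSC X P S).X₁).homology (n + 1)) :=
    isZero_of_subsingleton_ext P h1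
  have : IsZero (((extComplexSC X P S).X₃).homology n) := by
    apply hex.isZero_X₂
    · exact hz2.eq_of_src _ _
    · exact hz1.eq_of_tgt _ _
  exact subsingleton_ext_of_isZero P this

lemma subsingleton_hom_of_subsingleton_ext_zero {X Y : ModuleCat.{u} R}
    (h : Subsingleton (extGrp X Y 0)) : Subsingleton (X ⟶ Y) := by
  let P : ProjectiveResolution X := ProjectiveResolution.of X
  have hz : IsZero ((P.complex.linearYonedaObj R Y).homology 0) :=
    isZero_of_subsingleton_ext P h
  have hex : (P.complex.linearYonedaObj R Y).ExactAt 0 :=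
    (HomologicalComplex.exactAt_iff_isZero_homology _ _).mpr hz
  rw [HomologicalComplex.exactAt_iff' _ 0 0 1 CochainComplex.prev_nat_zero
    (CochainComplex.next _ _)] at hex
  rw [ShortComplex.moduleCat_exact_iff] at hex
  have h0 : ∀ f : X ⟶ Y, f = 0 := by
    intro f
    have hcyc : ((P.complex.linearYonedaObj R Y).sc' 0 0 1).g (P.π.f 0 ≫ f) = 0 := by
      show P.complex.d 1 0 ≫ P.π.f 0 ≫ f = 0
      exact (Category.assoc _ _ _).symm.trans
        ((congrArg (· ≫ f) P.complex_d_comp_π_f_zero).trans Limits.zero_comp)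
    obtain ⟨x₁, hx₁⟩ := hex _ hcyc
    have hf0 : P.π.f 0 ≫ f = 0 := by
      rw [← hx₁]
      show (P.complex.d 0 0 : _) ≫ x₁ = 0
      rw [P.complex.shape 0 0 (by simp)]
      exact Limits.zero_comp
    have : Epi (P.π.f 0) := inferInstance
    exact (cancel_epi (P.π.f 0)).mp (hf0.trans Limits.comp_zero.symm)
  exact ⟨fun f g => by
    have := h0 (f - g); rwa [sub_eq_zero] at this⟩

end ExtMachinery

section Rees

open CategoryTheory.Limits Opposite RingTheory.Sequence Pointwise

variable {R : Type u} [CommRing R] [IsNoetherianRing R]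

lemma exists_smul_regular_of_subsingleton_ext_zero (I : Ideal R)
    (M : Type u) [AddCommGroup M] [Module R M] [Module.Finite R M]
    (h : Subsingleton (extGrp (ModuleCat.of R (R ⧸ I)) (ModuleCat.of R M) 0)) :
    ∃ x ∈ I, IsSMulRegular M x := by
  by_cases hM : Subsingleton M
  · exact ⟨0, I.zero_mem, fun a b _ => Subsingleton.elim a b⟩
  have : Nontrivial M := not_subsingleton_iff_nontrivial.mp hM
  by_contra hcon
  push_neg at hcon
  have hsub : (I : Set R) ⊆ ⋃ p ∈ associatedPrimes R M, (p : Set R) := by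
    rw [biUnion_associatedPrimes_eq_zero_divisors]
    intro x hx
    have := hcon x hx
    rw [isSMulRegular_iff_right_eq_zero_of_smul] at this
    push_neg at this
    obtain ⟨m, hm1, hm2⟩ := this
    exact ⟨m, hm2, hm1⟩
  have hfin : (associatedPrimes R M).Finite := aux_associatedPrimes_finite R M
  obtain ⟨p, hp, hIp⟩ : ∃ p ∈ associatedPrimes R M, I ≤ p := by
    obtain ⟨p0, hp0⟩ := associatedPrimes.nonempty R M
    classical
    have hsub' : (I : Set R) ⊆ ⋃ i ∈ (hfin.toFinset : Set (Ideal R)),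
        ((id i : Ideal R) : Set R) := by
      intro x hx
      have := hsub hx
      simp only [Set.mem_iUnion] at this ⊢
      obtain ⟨p, hp, hxp⟩ := this
      exact ⟨p, hfin.mem_toFinset.mpr hp, hxp⟩
    obtain ⟨i, hi, hIi⟩ := (Ideal.subset_union_prime p0 p0
      (fun i hi _ _ => (hfin.mem_toFinset.mp hi).isPrime)).mp hsub'
    exact ⟨i, hfin.mem_toFinset.mp hi, hIi⟩
  obtain ⟨hprime, m, hm⟩ := isAssociatedPrime_iff.mp hp
  have hm0 : m ≠ 0 := by
    rintro rfl
    apply hprime.ne_top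
    rw [hm, Ideal.eq_top_iff_one, Submodule.mem_colon_singleton, smul_zero]
    exact Submodule.zero_mem _
  have hIann : ∀ r ∈ I, r • m = 0 := by
    intro r hr
    have : r ∈ p := hIp hr
    rw [hm, Submodule.mem_colon_singleton, Submodule.mem_bot] at this
    exact this
  let φ : (R ⧸ I) →ₗ[R] M := Submodule.liftQ I (LinearMap.toSpanSingleton R M m)
    (fun r hr => by simpa using hIann r hr)
  have hφ : φ ≠ 0 := by
    intro h0
    apply hm0
    have : φ (Submodule.Quotient.mk 1) = m := by
      rw [Submodule.liftQ_apply]; simp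
    rw [h0] at this
    simpa using this.symm
  have := subsingleton_hom_of_subsingleton_ext_zero h
  exact hφ (congrArg ModuleCat.Hom.hom (this.elim (ModuleCat.ofHom φ) 0))

theorem exists_isWeaklyRegular_of_subsingleton_ext (I : Ideal R) (d : ℕ) :
    ∀ (M : Type u) [AddCommGroup M] [Module R M] [Module.Finite R M],
    (∀ i < d, Subsingleton (extGrp (ModuleCat.of R (R ⧸ I)) (ModuleCat.of R M) i)) →
    ∃ rs : List R, rs.length = d ∧ (∀ r ∈ rs, r ∈ I) ∧ IsWeaklyRegular M rs := by
  induction d with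
  | zero => exact fun M _ _ _ _ => ⟨[], rfl, by simp, IsWeaklyRegular.nil R M⟩
  | succ d IH =>
    intro M _ _ _ hvan
    obtain ⟨x, hxI, hxreg⟩ := exists_smul_regular_of_subsingleton_ext_zero I M
      (hvan 0 (Nat.succ_pos d))
    let S : ShortComplex (ModuleCat.{u} R) := ShortComplex.mk
      (ModuleCat.ofHom (LinearMap.lsmul R M x))
      (ModuleCat.ofHom (x • (⊤ : Submodule R M)).mkQ)
      (by
        ext m
        show Submodule.Quotient.mk (x • m) = 0
        rw [Submodule.Quotient.mk_eq_zero]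
        exact Submodule.smul_mem_pointwise_smul m x ⊤ trivial)
    have hSE : S.ShortExact := by
      haveI : Mono S.f := by
        rw [ModuleCat.mono_iff_injective]; exact hxreg
      haveI : Epi S.g := by
        rw [ModuleCat.epi_iff_surjective]; exact Submodule.mkQ_surjective _
      refine ⟨?_⟩
      rw [ShortComplex.moduleCat_exact_iff]
      intro m hm
      have : m ∈ x • (⊤ : Submodule R M) := by
        rwa [← Submodule.Quotient.mk_eq_zero]
      have this2 : m ∈ x • ((⊤ : Submodule R M) : Set M) := by
        rw [← Submodule.coe_pointwise_smul]; exact this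
      obtain ⟨y, -, hy⟩ := Set.mem_smul_set.mp this2
      exact ⟨y, hy⟩
    have hvan' : ∀ i < d, Subsingleton
        (extGrp (ModuleCat.of R (R ⧸ I)) (ModuleCat.of R (M ⧸ x • (⊤ : Submodule R M))) i) := by
      intro i hi
      exact subsingleton_ext_of_ses hSE _ i (hvan i (Nat.lt_succ_of_lt hi))
        (hvan (i + 1) (Nat.succ_lt_succ hi))
    obtain ⟨rs, hlen, hmem, hreg⟩ := IH (M ⧸ x • (⊤ : Submodule R M)) hvan'
    refine ⟨x :: rs, by simp [hlen], ?_, IsWeaklyRegular.cons hxreg hreg⟩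
    intro r hr
    rcases List.mem_cons.mp hr with rfl | hr
    · exact hxI
    · exact hmem r hr

end Rees

section Localize

open RingTheory.Sequence IsLocalRing TensorProduct

variable {R : Type u} [CommRing R] [IsNoetherianRing R]

lemma aux_depth_isAssociatedPrime (P : Ideal R) [hP : P.IsPrime] (xs : List R)
    (hxs : IsWeaklyRegular R xs) (hmemP : ∀ r ∈ xs, r ∈ P) (d : ℕ) (hlen : xs.length = d)
    (hdepth : moduleDepth (Localization.AtPrime P) (Localization.AtPrime P) = (d : ℕ∞)) :
    IsAssociatedPrime (maximalIdeal (Localization.AtPrime P))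
      ((Localization.AtPrime P) ⧸
        (Ideal.ofList (xs.map (algebraMap R (Localization.AtPrime P))) •
          (⊤ : Submodule (Localization.AtPrime P) (Localization.AtPrime P)))) := by
  set Rp := Localization.AtPrime P with hRp
  haveI : IsNoetherianRing Rp := IsLocalization.isNoetherianRing P.primeCompl Rp inferInstance
  set ys : List Rp := xs.map (algebraMap R Rp) with hys_def
  have h1 : IsWeaklyRegular (R ⊗[R] Rp) xs := hxs.isWeaklyRegular_rTensor (M₂ := Rp)
  have h2 : IsWeaklyRegular Rp xs := ((TensorProduct.lid R Rp).isWeaklyRegular_congr xs).mp h1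
  have hys_w : IsWeaklyRegular Rp ys :=
    (isWeaklyRegular_map_algebraMap_iff (R := R) (S := Rp) (M := Rp) xs).mpr h2
  have hysm : ∀ y ∈ ys, y ∈ maximalIdeal Rp := by
    intro y hy
    rw [hys_def, List.mem_map] at hy
    obtain ⟨x, hx, rfl⟩ := hy
    exact (IsLocalization.AtPrime.to_map_mem_maximal_iff Rp P x).mpr (hmemP x hx)
  have hys : IsRegular Rp ys :=
    (IsLocalRing.isRegular_iff_isWeaklyRegular_of_subset_maximalIdeal hysm).mpr hys_w
  set A := Rp ⧸ (Ideal.ofList ys • (⊤ : Submodule Rp Rp)) with hA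
  haveI : Nontrivial A := hys.quot_ofList_smul_nontrivial ⊤
  -- every element of the maximal ideal is a zerodivisor on A
  have hzd : ∀ y ∈ maximalIdeal Rp, ¬ IsSMulRegular A y := by
    intro y hy hreg
    have happ : IsWeaklyRegular Rp (ys ++ [y]) := by
      rw [isWeaklyRegular_append_iff]
      exact ⟨hys_w, (isWeaklyRegular_singleton_iff _ _).mpr hreg⟩
    have happm : ∀ r ∈ ys ++ [y], r ∈ maximalIdeal Rp := by
      intro r hr
      rcases List.mem_append.mp hr with h | h
      · exact hysm r h
      · rw [List.mem_singleton.mp h]; exact hy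
    have happreg : IsRegular Rp (ys ++ [y]) :=
      (IsLocalRing.isRegular_iff_isWeaklyRegular_of_subset_maximalIdeal happm).mpr happ
    have hmem : ((d + 1 : ℕ) : ℕ∞) ∈ {n : ℕ∞ | ∃ rs : List Rp, (rs.length : ℕ∞) = n ∧
        (∀ r ∈ rs, r ∈ maximalIdeal Rp) ∧ IsRegular Rp rs} := by
      refine ⟨ys ++ [y], ?_, happm, happreg⟩
      simp [hys_def, hlen]
    have hle : ((d + 1 : ℕ) : ℕ∞) ≤ moduleDepth Rp Rp := le_sSup hmem
    rw [hdepth] at hle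
    exact absurd (Nat.cast_le.mp hle) (by omega)
  have hsub : ((maximalIdeal Rp : Ideal Rp) : Set Rp) ⊆
      ⋃ p ∈ associatedPrimes Rp A, (p : Set Rp) := by
    rw [biUnion_associatedPrimes_eq_zero_divisors]
    intro y hy
    have := hzd y hy
    rw [isSMulRegular_iff_right_eq_zero_of_smul] at this
    push_neg at this
    obtain ⟨m, hm1, hm2⟩ := this
    exact ⟨m, hm2, hm1⟩
  have hfin : (associatedPrimes Rp A).Finite := aux_associatedPrimes_finite Rp A
  obtain ⟨q, hq, hmq⟩ : ∃ q ∈ associatedPrimes Rp A, maximalIdeal Rp ≤ q := by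
    obtain ⟨q0, hq0⟩ := associatedPrimes.nonempty Rp A
    classical
    have hsub' : ((maximalIdeal Rp : Ideal Rp) : Set Rp) ⊆
        ⋃ i ∈ (hfin.toFinset : Set (Ideal Rp)), ((id i : Ideal Rp) : Set Rp) := by
      intro x hx
      have := hsub hx
      simp only [Set.mem_iUnion] at this ⊢
      obtain ⟨p, hp, hxp⟩ := this
      exact ⟨p, hfin.mem_toFinset.mpr hp, hxp⟩
    obtain ⟨i, hi, hIi⟩ := (Ideal.subset_union_prime q0 q0
      (fun i hi _ _ => (hfin.mem_toFinset.mp hi).isPrime)).mp hsub'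
    exact ⟨i, hfin.mem_toFinset.mp hi, hIi⟩
  have hqm : q ≤ maximalIdeal Rp := IsLocalRing.le_maximalIdeal hq.isPrime.ne_top
  have : maximalIdeal Rp = q := le_antisymm hmq hqm
  rw [this]
  exact hq

lemma aux_isAssociatedPrime_descend (P : Ideal R) [hP : P.IsPrime] (J : Ideal R)
    (h : IsAssociatedPrime (maximalIdeal (Localization.AtPrime P))
      ((Localization.AtPrime P) ⧸
        ((J.map (algebraMap R (Localization.AtPrime P))) •
          (⊤ : Submodule (Localization.AtPrime P) (Localization.AtPrime P))))) :
    IsAssociatedPrime P (R ⧸ (J • (⊤ : Submodule R R))) := by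
  classical
  set Rp := Localization.AtPrime P with hRp
  set S := P.primeCompl
  set J' : Ideal Rp := J.map (algebraMap R Rp) with hJ'
  set A := Rp ⧸ (J' • (⊤ : Submodule Rp Rp)) with hA
  haveI : IsNoetherianRing Rp := IsLocalization.isNoetherianRing P.primeCompl Rp inferInstance
  obtain ⟨hmprime, ξ, hξ⟩ := isAssociatedPrime_iff.mp h
  have hξann : ∀ c : Rp, c ∈ maximalIdeal Rp ↔ c • ξ = 0 := fun c => by
    rw [hξ, Submodule.mem_colon_singleton, Submodule.mem_bot]
  obtain ⟨z, hz⟩ := Submodule.Quotient.mk_surjective _ ξ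
  obtain ⟨r, s, hrs⟩ := IsLocalization.exists_mk'_eq S z
  -- η = mk (algebraMap r) = algebraMap s • ξ
  set η : A := Submodule.Quotient.mk (algebraMap R Rp r) with hη_def
  have hη : η = algebraMap R Rp s • ξ := by
    rw [← hz, hη_def, ← Submodule.Quotient.mk_smul]
    congr 1
    rw [← hrs, smul_eq_mul, IsLocalization.mk'_spec']
  have hsP : (s : R) ∉ P := s.2
  have hsm : algebraMap R Rp s ∉ maximalIdeal Rp := by
    rw [IsLocalization.AtPrime.to_map_mem_maximal_iff Rp P]
    exact hsP
  have key : ∀ c : Rp, c ∈ maximalIdeal Rp ↔ c • η = 0 := by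
    intro c
    constructor
    · intro hc
      rw [hη, smul_comm, (hξann c).mp hc, smul_zero]
    · intro hc
      rw [hη, smul_smul] at hc
      have : c * algebraMap R Rp s ∈ maximalIdeal Rp := (hξann _).mpr hc
      rcases hmprime.mem_or_mem this with h' | h'
      · exact h'
      · exact absurd h' hsm
  -- membership translation in A
  have hJ'top : (J' • (⊤ : Submodule Rp Rp)) = (J' : Submodule Rp Rp) := by
    rw [smul_eq_mul, Ideal.mul_top]
  have hmkA : ∀ w : Rp, (Submodule.Quotient.mk w : A) = 0 ↔ w ∈ J' := by
    intro w
    rw [Submodule.Quotient.mk_eq_zero, hJ'top]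
  have hJtop : ∀ w : R, (Submodule.Quotient.mk w : R ⧸ (J • (⊤ : Submodule R R))) = 0 ↔ w ∈ J := by
    intro w
    rw [Submodule.Quotient.mk_eq_zero, smul_eq_mul, Ideal.mul_top]
  -- finite generation of P, clearing denominators
  obtain ⟨T, hT⟩ := (IsNoetherian.noetherian P : P.FG)
  have hTgen : ∀ a : R, ∃ t : R, t ∈ S ∧ (a ∈ T → t * (a * r) ∈ J) := by
    intro a
    by_cases haT : a ∈ T
    · have haP : a ∈ P := by rw [← hT]; exact Submodule.subset_span haT
      have : algebraMap R Rp a • η = 0 := by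
        rw [← key]
        exact (IsLocalization.AtPrime.to_map_mem_maximal_iff Rp P a).mpr haP
      have har : algebraMap R Rp (a * r) ∈ J' := by
        rw [hη_def, ← Submodule.Quotient.mk_smul, hmkA, smul_eq_mul, ← map_mul] at this
        exact this
      obtain ⟨⟨j, s'⟩, hjs⟩ := (IsLocalization.mem_map_algebraMap_iff S Rp).mp har
      rw [← map_mul] at hjs
      obtain ⟨u, hu⟩ := (IsLocalization.eq_iff_exists S Rp).mp hjs
      refine ⟨u * s', mul_mem u.2 s'.2, fun _ => ?_⟩
      have heq : (u : R) * s' * (a * r) = (u : R) * j := by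
        rw [show (u : R) * s' * (a * r) = (u : R) * (a * r * s') from by ring]
        exact hu
      rw [heq]
      exact J.mul_mem_left _ j.2
    · exact ⟨1, one_mem S, fun haT' => absurd haT' haT⟩
  choose t htS htJ using hTgen
  set tt : R := ∏ a ∈ T, t a with htt
  have httS : tt ∈ S := Submonoid.prod_mem S (fun a _ => htS a)
  have httP : tt ∉ P := httS
  -- the claim
  refine isAssociatedPrime_iff.mpr ⟨hP, Submodule.Quotient.mk (tt * r), ?_⟩
  ext c
  rw [Submodule.mem_colon_singleton, Submodule.mem_bot, ← Submodule.Quotient.mk_smul, smul_eq_mul,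
    hJtop]
  constructor
  · intro hc
    -- c ∈ P → c * (tt * r) ∈ J
    have hc' : c ∈ Submodule.span R (T : Set R) := by rw [hT]; exact hc
    have main : ∀ a ∈ T, a * (tt * r) ∈ J := by
      intro a haT
      have h1 : t a * (a * r) ∈ J := htJ a haT
      have h2 : tt = t a * ∏ b ∈ T.erase a, t b := (Finset.mul_prod_erase T t haT).symm
      have : a * (tt * r) = (∏ b ∈ T.erase a, t b) * (t a * (a * r)) := by
        rw [h2]; ring
      rw [this]
      exact J.mul_mem_left _ h1
    refine Submodule.span_induction (fun a haT => main a haT) ?_ ?_ ?_ hc'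
    · rw [zero_smul]; exact J.zero_mem
    · intro x y _ _ hx hy
      rw [add_smul]; exact J.add_mem hx hy
    · intro c' x _ hx
      simp only [smul_eq_mul] at hx ⊢
      rw [mul_assoc]
      exact J.mul_mem_left _ hx
  · intro hc
    -- c * (tt * r) ∈ J → c ∈ P
    have h1 : algebraMap R Rp (c * (tt * r)) ∈ J' := Ideal.mem_map_of_mem _ hc
    have h2 : algebraMap R Rp (c * tt) • η = 0 := by
      rw [hη_def, ← Submodule.Quotient.mk_smul, hmkA, smul_eq_mul, ← map_mul]
      have : c * tt * r = c * (tt * r) := by ring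
      rw [this]
      exact h1
    have h3 : c * tt ∈ P := by
      rw [← IsLocalization.AtPrime.to_map_mem_maximal_iff Rp P, key]
      exact h2
    rcases hP.mem_or_mem h3 with h' | h'
    · exact h'
    · exact absurd h' httP

end Localize

/-- If `I ⊊ R` is an ideal of a Noetherian ring with `grade(I) = d`, then
there are only finitely many primes `P ⊇ I` with `depth R_P = d`. -/
theorem finite_primes_of_depth_eq_grade {R : Type u} [CommRing R] [IsNoetherianRing R]
    (I : Ideal R) (hI : I ≠ ⊤) (d : ℕ) (hgrade : idealGrade R I = (d : ℕ∞)) :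
    {P : Ideal R | ∃ hP : P.IsPrime, I ≤ P ∧ primeDepth R P hP = (d : ℕ∞)}.Finite := by
  have hvan : ∀ i < d, Subsingleton (((Ext R (ModuleCat.{u} R) i).obj
      (Opposite.op (ModuleCat.of R (R ⧸ I)))).obj (ModuleCat.of R R)) := by
    intro i hi
    by_contra hns
    have h1 : idealGrade R I ≤ (i : ℕ∞) := sInf_le ⟨i, rfl, hns⟩
    rw [hgrade] at h1
    exact absurd (Nat.cast_le.mp h1) (by omega)
  obtain ⟨xs, hlen, hmemI, hxs⟩ :=
    exists_isWeaklyRegular_of_subsingleton_ext I d R hvan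
  apply Set.Finite.subset
    (aux_associatedPrimes_finite R (R ⧸ ((Ideal.ofList xs) • (⊤ : Submodule R R))))
  intro P hP
  obtain ⟨hPp, hIP, hdepth⟩ := hP
  haveI := hPp
  have hdepth' : moduleDepth (Localization.AtPrime P) (Localization.AtPrime P) = (d : ℕ∞) :=
    hdepth
  have hB := aux_depth_isAssociatedPrime P xs hxs (fun r hr => hIP (hmemI r hr)) d hlen hdepth'
  rw [← Ideal.map_ofList] at hB
  exact aux_isAssociatedPrime_descend P (Ideal.ofList xs) hB
end

section
/- Finite shrinking lemma, local algebra version for one point: Let $(R, \mathfrak{m}, K)$ be a local ring, $M$ a finitely generated $R$-module, and $s_1, \dots, s_u \in M$ with $u > w \geq 0$ such that the submodule $(s_1, \dots, s_u)$ is $w$-basic in $M$ (i.e., $\mu(M/(s_1,\dots,s_u)) \leq \mu(M) - w$). Then there exist $r_2, \dots, r_u \in R$ such that the submodule $(s_2 + r_2 s_1, \dots, s_u + r_u s_1)$ is $w$-basic in $M$, where moreover each $r_j$ can be chosen to be $0$ or $1$. -/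
/-- The minimal number of generators of a module. -/
noncomputable def minGens (R M : Type*) [Semiring R] [AddCommMonoid M] [Module R M] : ℕ :=
  sInf {n : ℕ | ∃ s : Finset M, s.card = n ∧ Submodule.span R (s : Set M) = ⊤}


open IsLocalRing Submodule Module

section Setup
variable (R M : Type*) [CommRing R] [IsLocalRing R] [AddCommGroup M] [Module R M]

noncomputable instance auxResMod :
    Module (ResidueField R) (M ⧸ (maximalIdeal R • ⊤ : Submodule R M)) :=
  inferInstanceAs (Module (R ⧸ maximalIdeal R) (M ⧸ (maximalIdeal R • ⊤ : Submodule R M)))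

instance auxResTower :
    IsScalarTower R (ResidueField R) (M ⧸ (maximalIdeal R • ⊤ : Submodule R M)) :=
  Module.IsTorsionBySet.isScalarTower
    (Module.isTorsionBySet_quotient_ideal_smul M (maximalIdeal R))

example : Function.Surjective (algebraMap R (ResidueField R)) := Ideal.Quotient.mk_surjective

noncomputable instance auxResFin [Module.Finite R M] :
    Module.Finite (ResidueField R) (M ⧸ (maximalIdeal R • ⊤ : Submodule R M)) :=
  Module.Finite.of_restrictScalars_finite R _ _

end Setup

section Lemmas
variable {R M : Type*} [CommRing R] [IsLocalRing R] [AddCommGroup M] [Module R M]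
  [Module.Finite R M]

local notation "K" => ResidueField R
local notation "mm" => (maximalIdeal R • ⊤ : Submodule R M)
local notation "pr" => Submodule.mkQ (maximalIdeal R • ⊤ : Submodule R M)

theorem aux_span_top_iff (S : Set M) :
    span R S = ⊤ ↔ span K (pr '' S) = ⊤ := by
  have hres : (span K (pr '' S)).restrictScalars R = span R (pr '' S) :=
    restrictScalars_span R K Ideal.Quotient.mk_surjective _
  have h2 : span K (pr '' S) = ⊤ ↔ span R S ⊔ maximalIdeal R • ⊤ = ⊤ :=
    (restrictScalars_eq_top_iff R (p := span K (pr '' S))).symm.trans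
      (by rw [hres, ← Submodule.map_span, Submodule.map_mkQ_eq_top, sup_comm])
  rw [h2]
  constructor
  · intro h; rw [h]; exact top_sup_eq _
  · intro h
    have hjac : maximalIdeal R ≤ (⊥ : Ideal R).jacobson :=
      (IsLocalRing.jacobson_eq_maximalIdeal ⊥ bot_ne_top).ge
    have hle : (⊤ : Submodule R M) ≤ span R S ⊔ maximalIdeal R • ⊤ := h.ge
    exact top_le_iff.mp (le_of_le_smul_of_le_jacobson_bot (Module.Finite.fg_top (R := R)) hjac hle)

theorem aux_minGens_eq_finrank :
    minGens R M = Module.finrank K (M ⧸ mm) := by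
  classical
  have hKfin : Module.Finite K (M ⧸ mm) := auxResFin R M
  apply le_antisymm
  · -- lift a basis
    set n := Module.finrank K (M ⧸ mm)
    let b := Module.finBasis K (M ⧸ mm)
    choose g hg using fun i => Submodule.mkQ_surjective mm (b i)
    have hspan : span R ((Finset.image g Finset.univ : Finset M) : Set M) = ⊤ := by
      rw [aux_span_top_iff]
      refine top_le_iff.mp ?_
      rw [← b.span_eq]
      refine span_le.mpr ?_
      rintro x ⟨i, rfl⟩
      exact subset_span ⟨g i, by simp [Finset.mem_image], hg i⟩
    calc minGens R M ≤ (Finset.image g Finset.univ).card :=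
          Nat.sInf_le ⟨_, rfl, hspan⟩
      _ ≤ n := le_trans Finset.card_image_le (by simp; exact le_rfl)
  · have hne : {n : ℕ | ∃ s : Finset M, s.card = n ∧ span R (s : Set M) = ⊤}.Nonempty := by
      obtain ⟨S, hS⟩ := Module.Finite.fg_top (R := R) (M := M)
      exact ⟨S.card, S, rfl, hS⟩
    refine le_csInf hne ?_
    rintro k ⟨S, rfl, hS⟩
    rw [aux_span_top_iff] at hS
    have himg : pr '' (S : Set M) = ((S.image pr : Finset _) : Set _) := by
      simp [Finset.coe_image]
    calc Module.finrank K (M ⧸ mm)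
        = Module.finrank K (⊤ : Submodule K (M ⧸ mm)) := (finrank_top _ _).symm
      _ = Module.finrank K (span K (pr '' (S : Set M))) := by rw [hS]
      _ ≤ (S.image pr).card := by rw [himg]; exact finrank_span_finset_le_card _
      _ ≤ S.card := Finset.card_image_le

theorem aux_minGens_quot_add (S : Set M) :
    minGens R (M ⧸ span R S) + Module.finrank K (span K (pr '' S))
      = Module.finrank K (M ⧸ mm) := by
  classical
  set N := span R S with hN
  have hmap : (maximalIdeal R • ⊤ : Submodule R M).map N.mkQ
      = (maximalIdeal R • ⊤ : Submodule R (M ⧸ N)) := by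
    rw [Submodule.map_smul'', Submodule.map_top, Submodule.range_mkQ]
  have hcond : (maximalIdeal R • ⊤ : Submodule R M) ≤
      LinearMap.ker ((maximalIdeal R • ⊤ : Submodule R (M ⧸ N)).mkQ.comp N.mkQ) := by
    intro x hx
    simp only [LinearMap.mem_ker, LinearMap.comp_apply, mkQ_apply, Quotient.mk_eq_zero]
    exact hmap ▸ mem_map_of_mem hx
  set ψ₀ : (M ⧸ mm) →ₗ[R] ((M ⧸ N) ⧸ (maximalIdeal R • ⊤ : Submodule R (M ⧸ N))) :=
    liftQ _ _ hcond with hψ₀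
  have hbot : (maximalIdeal R • ⊤ : Submodule R M).map pr = ⊥ := by
    rw [eq_bot_iff, map_le_iff_le_comap, comap_bot, ker_mkQ]
  have hker0 : LinearMap.ker ψ₀ = Submodule.restrictScalars R (span K (pr '' S)) := by
    rw [hψ₀, ker_liftQ, restrictScalars_span R K Ideal.Quotient.mk_surjective,
      ← Submodule.map_span, ← hN, LinearMap.ker_comp, Submodule.ker_mkQ, ← hmap,
      comap_map_mkQ, Submodule.map_sup, hbot, sup_bot_eq]
  set ψ := ψ₀.extendScalarsOfSurjective (S := K)
    (Ideal.Quotient.mk_surjective (I := maximalIdeal R)) with hψ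
  have hψapp : ∀ x, ψ x = ψ₀ x := fun x => rfl
  have hsurj : Function.Surjective ψ := by
    intro w
    obtain ⟨y, rfl⟩ := mkQ_surjective _ w
    obtain ⟨x, rfl⟩ := mkQ_surjective N y
    exact ⟨pr x, rfl⟩
  have hkerK : LinearMap.ker ψ = span K (pr '' S) := by
    ext x
    rw [LinearMap.mem_ker, hψapp, ← LinearMap.mem_ker, hker0]
    rfl
  have hrn := LinearMap.finrank_range_add_finrank_ker ψ
  rw [hkerK, LinearMap.range_eq_top.mpr hsurj, finrank_top] at hrn
  rw [← hrn, aux_minGens_eq_finrank]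

theorem aux_map_pr_span (S : Set M) :
    Submodule.restrictScalars R (span K (pr '' S)) = (span R S).map pr := by
  rw [restrictScalars_span R K Ideal.Quotient.mk_surjective, Submodule.map_span]

theorem aux_mem_of (S : Set M) (x : M) (h : pr x ∈ span K (pr '' S)) :
    x ∈ span R S ⊔ (maximalIdeal R • ⊤ : Submodule R M) := by
  have h2 : pr x ∈ (span R S).map pr := by rw [← aux_map_pr_span]; exact h
  obtain ⟨y, hy, hxy⟩ := h2
  have : x - y ∈ (maximalIdeal R • ⊤ : Submodule R M) := by
    rw [← Submodule.ker_mkQ (maximalIdeal R • ⊤ : Submodule R M), LinearMap.mem_ker,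
      map_sub, hxy, sub_self]
  have hx : x = y + (x - y) := by abel
  rw [hx]
  exact add_mem_sup hy this

theorem aux_minGens_congr (S₁ S₂ : Set M)
    (h : span R S₁ ⊔ (maximalIdeal R • ⊤ : Submodule R M)
       = span R S₂ ⊔ (maximalIdeal R • ⊤ : Submodule R M)) :
    minGens R (M ⧸ span R S₁) = minGens R (M ⧸ span R S₂) := by
  have hbot : (maximalIdeal R • ⊤ : Submodule R M).map pr = ⊥ := by
    rw [eq_bot_iff, map_le_iff_le_comap, comap_bot, ker_mkQ]
  have hspan : span K (pr '' S₁) = span K (pr '' S₂) := by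
    apply restrictScalars_injective R
    rw [aux_map_pr_span, aux_map_pr_span, ← sup_bot_eq ((span R S₁).map pr),
      ← sup_bot_eq ((span R S₂).map pr), ← hbot, ← Submodule.map_sup, ← Submodule.map_sup, h]
  have h1 := aux_minGens_quot_add (R := R) (M := M) S₁
  have h2 := aux_minGens_quot_add (R := R) (M := M) S₂
  rw [hspan] at h1
  omega

end Lemmas


/-- Finite shrinking lemma, local one-point version. If the submodule
generated by `s 0, …, s (u-1)` is `w`-basic in `M` with `u > w`, then one can modify
`s 1, …, s (u-1)` by multiples (with coefficients `0` or `1`) of `s 0` so that the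
submodule they generate is still `w`-basic in `M`. -/
theorem finite_shrinking_local {R M : Type*} [CommRing R] [IsLocalRing R]
    [AddCommGroup M] [Module R M] [Module.Finite R M]
    (u w : ℕ) (hw : w < u) (s : Fin u → M)
    (hbasic : minGens R (M ⧸ Submodule.span R (Set.range s)) ≤ minGens R M - w) :
    ∃ r : Fin u → R, (∀ i, r i = 0 ∨ r i = 1) ∧
      minGens R (M ⧸ Submodule.span R
        ((fun i => s i + r i • s (⟨0, by omega⟩ : Fin u)) ''
          {i : Fin u | i ≠ (⟨0, by omega⟩ : Fin u)})) ≤ minGens R M - w := by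
  classical
  have hz : (0 : ℕ) < u := by omega
  let z : Fin u := ⟨0, hz⟩
  let T : Set (Fin u) := {i : Fin u | i ≠ z}
  by_cases hA : minGens R (M ⧸ span R (s '' T)) ≤ minGens R M - w
  · refine ⟨0, fun i => Or.inl rfl, ?_⟩
    have he : (fun i => s i + (0 : Fin u → R) i • s (⟨0, by omega⟩ : Fin u)) = s := by
      funext i; simp
    rw [he]
    exact hA
  · have h1 := aux_minGens_quot_add (R := R) (M := M) (Set.range s)
    have h2 := aux_minGens_quot_add (R := R) (M := M) (s '' T)
    have hM := aux_minGens_eq_finrank (R := R) (M := M)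
    have hmono : Module.finrank (ResidueField R) (span (ResidueField R) ((maximalIdeal R • ⊤ : Submodule R M).mkQ '' (s '' T)))
        ≤ Module.finrank (ResidueField R) (span (ResidueField R) ((maximalIdeal R • ⊤ : Submodule R M).mkQ '' (Set.range s))) := by
      have : Module.Finite (ResidueField R) (M ⧸ (maximalIdeal R • ⊤ : Submodule R M)) := auxResFin R M
      exact Submodule.finrank_mono (span_mono (Set.image_mono (Set.image_subset_range s T)))
    have hd' : Module.finrank (ResidueField R) (span (ResidueField R) ((maximalIdeal R • ⊤ : Submodule R M).mkQ '' (s '' T))) < w := by omega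
    let v : {i : Fin u // i ≠ z} → (M ⧸ (maximalIdeal R • ⊤ : Submodule R M)) := fun i => (maximalIdeal R • ⊤ : Submodule R M).mkQ (s i)
    have hrange : Set.range v = (maximalIdeal R • ⊤ : Submodule R M).mkQ '' (s '' T) := by
      ext x
      constructor
      · rintro ⟨⟨j, hj⟩, rfl⟩
        exact ⟨s j, ⟨j, hj, rfl⟩, rfl⟩
      · rintro ⟨_, ⟨j, hj, rfl⟩, rfl⟩
        exact ⟨⟨j, hj⟩, rfl⟩
    have hnli : ¬ LinearIndependent (ResidueField R) v := by
      intro hli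
      have hc := finrank_span_eq_card hli
      rw [hrange] at hc
      have hcard : Fintype.card {i : Fin u // i ≠ z} = u - 1 := by
        simp [Fintype.card_subtype_compl]
      omega
    obtain ⟨l, hl⟩ : ∃ l, v l ∈ span (ResidueField R) (v '' (Set.univ \ {l})) := by
      by_contra hcon
      push_neg at hcon
      exact hnli (linearIndependent_iff_notMem_span.mpr hcon)
    let r : Fin u → R := fun i => if i = (l : Fin u) then 1 else 0
    refine ⟨r, fun i => by by_cases h : i = (l : Fin u) <;> simp [r, h], ?_⟩
    let t : Fin u → M := fun i => s i + r i • s z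
    have himg : v '' (Set.univ \ {l}) = (maximalIdeal R • ⊤ : Submodule R M).mkQ '' (s '' {j : Fin u | j ≠ z ∧ j ≠ (l : Fin u)}) := by
      ext x
      constructor
      · rintro ⟨⟨j, hj⟩, hjl, rfl⟩
        refine ⟨s j, ⟨j, ⟨hj, ?_⟩, rfl⟩, rfl⟩
        simpa [Subtype.ext_iff] using hjl.2
      · rintro ⟨_, ⟨j, ⟨hj1, hj2⟩, rfl⟩, rfl⟩
        exact ⟨⟨j, hj1⟩, ⟨trivial, by simp [Subtype.ext_iff, hj2]⟩, rfl⟩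
    have hsl : s (l : Fin u) ∈ span R (s '' {j : Fin u | j ≠ z ∧ j ≠ (l : Fin u)}) ⊔ (maximalIdeal R • ⊤ : Submodule R M) :=
      aux_mem_of _ _ (by rw [← himg]; exact hl)
    have hS0 : s '' {j : Fin u | j ≠ z ∧ j ≠ (l : Fin u)} ⊆ t '' T := by
      rintro _ ⟨j, ⟨hj1, hj2⟩, rfl⟩
      exact ⟨j, hj1, by simp [t, r, hj2]⟩
    have hsl' : s (l : Fin u) ∈ span R (t '' T) ⊔ (maximalIdeal R • ⊤ : Submodule R M) :=
      sup_le_sup_right (span_mono hS0) (maximalIdeal R • ⊤ : Submodule R M) hsl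
    have htl : t (l : Fin u) = s (l : Fin u) + s z := by simp [t, r]
    have htlm : t (l : Fin u) ∈ span R (t '' T) ⊔ (maximalIdeal R • ⊤ : Submodule R M) :=
      le_sup_left (α := Submodule R M) (subset_span ⟨(l : Fin u), l.2, rfl⟩)
    have hs0 : s z ∈ span R (t '' T) ⊔ (maximalIdeal R • ⊤ : Submodule R M) := by
      have : s z = t (l : Fin u) - s (l : Fin u) := by rw [htl]; abel
      rw [this]
      exact sub_mem htlm hsl'
    have hall : ∀ j, s j ∈ span R (t '' T) ⊔ (maximalIdeal R • ⊤ : Submodule R M) := by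
      intro j
      by_cases hjz : j = z
      · rw [hjz]; exact hs0
      · by_cases hjl : j = (l : Fin u)
        · rw [hjl]; exact hsl'
        · have : s j = t j := by simp [t, r, hjl]
          rw [this]
          exact le_sup_left (α := Submodule R M) (subset_span ⟨j, hjz, rfl⟩)
    have hsup : span R (t '' T) ⊔ (maximalIdeal R • ⊤ : Submodule R M) = span R (Set.range s) ⊔ (maximalIdeal R • ⊤ : Submodule R M) := by
      apply le_antisymm
      · refine sup_le ?_ le_sup_right
        refine (span_le.mpr ?_).trans le_sup_left
        rintro _ ⟨j, hj, rfl⟩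
        exact add_mem (subset_span ⟨j, rfl⟩) (smul_mem _ _ (subset_span ⟨z, rfl⟩))
      · refine sup_le ?_ le_sup_right
        refine span_le.mpr ?_
        rintro _ ⟨j, rfl⟩
        exact hall j
    have hfin : minGens R (M ⧸ span R (t '' T)) ≤ minGens R M - w := by
      rw [aux_minGens_congr (t '' T) (Set.range s) hsup]
      exact hbasic
    exact hfin
end

section
/- Let $K$ be a field, $V$ a $K$-vector space, and $v_1, \dots, v_u \in V$ with $u \geq 2$. If $\dim \operatorname{span}\{v_2, \dots, v_u\} < \dim \operatorname{span}\{v_1, \dots, v_u\}$ and $\{v_2, \dots, v_u\}$ is linearly dependent, then there exists $l$ with $2 \leq l \leq u$ such that $v_l \in \operatorname{span}\{v_{l+1}, \dots, v_u\}$ and $\dim \operatorname{span}\{v_2, \dots, v_{l-1}, v_l + v_1, v_{l+1}, \dots, v_u\} = \dim \operatorname{span}\{v_2, \dots, v_u\} + 1$. -/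
open Submodule Module Set

private lemma finrank_span_insert_aux {K V : Type*} [Field K] [AddCommGroup V] [Module K V]
    {s : Set V} (hs : s.Finite) {x : V} (hx : x ∉ Submodule.span K s) :
    Module.finrank K ↥(Submodule.span K (insert x s)) =
      Module.finrank K ↥(Submodule.span K s) + 1 := by
  have hxne : x ≠ 0 := fun h => hx (h ▸ (Submodule.span K s).zero_mem)
  have hfs : FiniteDimensional K ↥(Submodule.span K s) :=
    FiniteDimensional.span_of_finite K hs
  have hfx : FiniteDimensional K ↥(K ∙ x) := by infer_instance
  have hinf : (K ∙ x) ⊓ Submodule.span K s = ⊥ := by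
    rw [eq_bot_iff]
    rintro y ⟨hy1, hy2⟩
    rcases Submodule.mem_span_singleton.1 hy1 with ⟨a, rfl⟩
    rcases eq_or_ne a 0 with rfl | ha
    · simp
    · exact absurd (Submodule.smul_mem _ a⁻¹ hy2) (by simpa [smul_smul, inv_mul_cancel₀ ha])
  have h := Submodule.finrank_sup_add_finrank_inf_eq (K ∙ x) (Submodule.span K s)
  rw [hinf, finrank_bot, add_zero, finrank_span_singleton hxne] at h
  rw [Submodule.span_insert, h, add_comm]

/-- If dropping `v 1` strictly decreases the span of `v 1, …, v u` and
`v 2, …, v u` are linearly dependent, then there is `l` with `2 ≤ l ≤ u` such that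
`v l` lies in the span of the later vectors and replacing `v l` by `v l + v 1`
increases the dimension of the span by one. -/
theorem exists_index_span_dim_succ {K V : Type*} [Field K] [AddCommGroup V] [Module K V]
    (u : ℕ) (hu : 2 ≤ u) (v : ℕ → V)
    (hlt : Module.finrank K ↥(Submodule.span K (v '' Set.Icc 2 u)) <
      Module.finrank K ↥(Submodule.span K (v '' Set.Icc 1 u)))
    (hdep : ¬ LinearIndependent K (fun i : (Set.Icc 2 u) => v i)) :
    ∃ l, 2 ≤ l ∧ l ≤ u ∧ v l ∈ Submodule.span K (v '' Set.Icc (l + 1) u) ∧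
      Module.finrank K ↥(Submodule.span K
          ((fun i => if i = l then v l + v 1 else v i) '' Set.Icc 2 u)) =
        Module.finrank K ↥(Submodule.span K (v '' Set.Icc 2 u)) + 1 := by
  classical
  set W := Submodule.span K (v '' Set.Icc 2 u) with hW
  -- Step 1: `v 1 ∉ W`.
  have h1u : Set.Icc 1 u = insert 1 (Set.Icc 2 u) := by
    ext i
    simp only [Set.mem_Icc, Set.mem_insert_iff]
    omega
  have hv1 : v 1 ∉ W := by
    intro hmem
    have : v '' Set.Icc 1 u = insert (v 1) (v '' Set.Icc 2 u) := by
      rw [h1u, Set.image_insert_eq]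
    rw [this, Submodule.span_insert_eq_span hmem] at hlt
    exact lt_irrefl _ hlt
  -- Step 2: find `l` with `v l` in the span of the later vectors.
  have hex : ∃ l, 2 ≤ l ∧ l ≤ u ∧ v l ∈ Submodule.span K (v '' Set.Icc (l + 1) u) := by
    by_contra hcon
    push_neg at hcon
    apply hdep
    -- downward induction
    suffices h : ∀ n a, 2 ≤ a → u + 1 - a ≤ n →
        LinearIndependent K (fun i : (Set.Icc a u) => v i) by
      exact h (u + 1) 2 le_rfl (by omega)
    intro n
    induction n with
    | zero =>
      intro a h2a ha
      have : Set.Icc a u = (∅ : Set ℕ) := by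
        ext i; simp only [Set.mem_Icc, Set.mem_empty_iff_false, iff_false]; omega
      rw [this]
      exact linearIndependent_empty_type
    | succ n ih =>
      intro a h2a ha
      rcases le_or_gt a u with hau | hau
      · have hset : Set.Icc a u = insert a (Set.Icc (a + 1) u) := by
          ext i; simp only [Set.mem_Icc, Set.mem_insert_iff]; omega
        have hnot : a ∉ Set.Icc (a + 1) u := by simp
        rw [hset]; show LinearIndepOn K v _; rw [linearIndepOn_insert hnot]
        exact ⟨ih (a + 1) (by omega) (by omega), hcon a h2a hau⟩
      · have : Set.Icc a u = (∅ : Set ℕ) := by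
          ext i; simp only [Set.mem_Icc, Set.mem_empty_iff_false, iff_false]; omega
        rw [this]
        exact linearIndependent_empty_type
  obtain ⟨l, h2l, hlu, hl⟩ := hex
  refine ⟨l, h2l, hlu, hl, ?_⟩
  -- Step 3: the dimension computation.
  set w : ℕ → V := fun i => if i = l then v l + v 1 else v i with hw
  have hlmem : l ∈ Set.Icc 2 u := ⟨h2l, hlu⟩
  -- span of v over Icc 2 u minus l equals W
  have hsubset : Set.Icc (l + 1) u ⊆ Set.Icc 2 u \ {l} := by
    intro i hi
    simp only [Set.mem_Icc] at hi
    exact ⟨⟨by omega, hi.2⟩, by simp; omega⟩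
  have hvl : v l ∈ Submodule.span K (v '' (Set.Icc 2 u \ {l})) :=
    Submodule.span_mono (Set.image_mono (f := v) hsubset) hl
  have hspan_diff : Submodule.span K (v '' (Set.Icc 2 u \ {l})) = W := by
    apply le_antisymm
    · exact Submodule.span_mono (Set.image_mono (f := v) (Set.diff_subset))
    · rw [hW]
      apply Submodule.span_le.2
      rintro x ⟨i, hi, rfl⟩
      rcases eq_or_ne i l with rfl | hne
      · exact hvl
      · exact Submodule.subset_span ⟨i, ⟨hi, hne⟩, rfl⟩
  -- the image of w
  have himg : w '' Set.Icc 2 u = insert (v l + v 1) (v '' (Set.Icc 2 u \ {l})) := by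
    ext x
    constructor
    · rintro ⟨i, hi, rfl⟩
      rcases eq_or_ne i l with rfl | hne
      · left; simp [hw]
      · right; exact ⟨i, ⟨hi, hne⟩, by simp [hw, hne]⟩
    · rintro (rfl | ⟨i, ⟨hi, hne⟩, rfl⟩)
      · exact ⟨l, hlmem, by simp [hw]⟩
      · exact ⟨i, hi, by simp [hw, Set.mem_singleton_iff.not.1 hne]⟩
  have hnotmem : v l + v 1 ∉ Submodule.span K (v '' (Set.Icc 2 u \ {l})) := by
    rw [hspan_diff]
    intro hmem
    apply hv1
    have hvlW : v l ∈ W := hspan_diff ▸ hvl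
    have := W.sub_mem hmem hvlW
    simpa using this
  have hfin : (v '' (Set.Icc 2 u \ {l})).Finite :=
    ((Set.finite_Icc 2 u).diff (t := _)).image v
  rw [himg, finrank_span_insert_aux hfin hnotmem, hspan_diff]
end
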